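/- If G, F ∈ K are such that the polynomial x^{2n} − 2Gx^n + F^n is irreducible in K[x] (K a field of characteristic 0 containing a primitive n-th root of unity), then L = K[x]/(x^{2n} − 2Gx^n + F^n) is a Galois extension of K with Galois group isomorphic to the dihedral group D_n, where the action is generated by σ(x) = ξ_n x and τ(x) = F/x. -/

import Mathlib

open Polynomial

set_option maxHeartbeats 2000000 in
/-- If `K` is a field of characteristic 0 containing a primitive `n`-th root of unity
and `x^{2n} − 2·Gg·x^n + F^n` is irreducible over `K`, then
`L = K[x]/(x^{2n} − 2·Gg·x^n + F^n)` is a Galois extension of `K` whose Galois group is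
the dihedral group `D_n`, the action being generated by `σ(x) = ξ x` and
`τ(x) = F/x`. -/
theorem dihedral_galois_extension {K : Type*} [Field K] [CharZero K]
    (n : ℕ) (hn : 0 < n) (ξ : K) (hξ : IsPrimitiveRoot ξ n) (Gg F : K)
    (P : Polynomial K)
    (hP : P = X ^ (2 * n) - C (2 * Gg) * X ^ n + C (F ^ n))
    [hirr : Fact (Irreducible P)] :
    IsGalois K (AdjoinRoot P) ∧
    Nonempty ((AdjoinRoot P ≃ₐ[K] AdjoinRoot P) ≃* DihedralGroup n) ∧
    ∃ σ τ : AdjoinRoot P ≃ₐ[K] AdjoinRoot P,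
      σ (AdjoinRoot.root P) = algebraMap K (AdjoinRoot P) ξ * AdjoinRoot.root P ∧
      τ (AdjoinRoot.root P) = algebraMap K (AdjoinRoot P) F / AdjoinRoot.root P ∧
      Subgroup.closure {σ, τ} = ⊤ := by
  haveI : NeZero n := ⟨hn.ne'⟩
  have h1 : ¬(2*n = n) := by omega
  have h2 : ¬(2*n ≤ n) := by omega
  have h3 : n ≤ 2*n := by omega
  set L := AdjoinRoot P with hL
  set θ := AdjoinRoot.root P with hθ
  set φ := algebraMap K L with hφ
  have hPmonic : P.Monic := by rw [hP]; monicity! <;> simp [h1, h2, h3, hn.ne']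
  have hPne : P ≠ 0 := hPmonic.ne_zero
  have hdeg : P.natDegree = 2 * n := by rw [hP]; compute_degree! <;> simp [h1, h2, h3, hn.ne']
  haveI : FiniteDimensional K L := (AdjoinRoot.powerBasis hPne).finite
  have hfr : Module.finrank K L = 2 * n := by
    rw [(AdjoinRoot.powerBasis hPne).finrank, AdjoinRoot.powerBasis_dim, hdeg]
  have h0 : aeval θ P = 0 := by
    rw [aeval_def, AdjoinRoot.algebraMap_eq]; exact AdjoinRoot.eval₂_root P
  have hroot : θ ^ (2*n) - φ (2*Gg) * θ ^ n + φ (F^n) = 0 := by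
    have h0' : aeval θ (X ^ (2 * n) - C (2 * Gg) * X ^ n + C (F ^ n)) = 0 := by
      rw [← hP]; exact h0
    dsimp only [L] at *; simpa [hφ] using h0'
  have hF : F ≠ 0 := by
    rintro rfl
    have heq : P = X^n * (X^n - C (2*Gg)) := by
      rw [hP, zero_pow hn.ne', map_zero, add_zero, two_mul, pow_add]; ring
    rcases hirr.out.isUnit_or_isUnit heq with h | h
    · exact Polynomial.not_isUnit_of_natDegree_pos _ (by simpa using hn) h
    · exact Polynomial.not_isUnit_of_natDegree_pos _
        (by rw [Polynomial.natDegree_X_pow_sub_C]; exact hn) h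
  have hθ0 : θ ≠ 0 := by
    intro h
    apply hF
    have : φ (F ^ n) = 0 := by
      simpa [h, zero_pow hn.ne', zero_pow (by omega : 2*n ≠ 0)] using hroot
    have : F ^ n = 0 := by
      exact (_root_.map_eq_zero φ).mp this
    exact pow_eq_zero_iff hn.ne' |>.mp this
  have hφF : φ F ≠ 0 := by simpa using hF
  have hξL : IsPrimitiveRoot (φ ξ) n := hξ.map_of_injective φ.injective
  have hξn : φ ξ ^ n = 1 := by
    rw [← map_pow, hξ.pow_eq_one, map_one]
  have hξ0 : φ ξ ≠ 0 := fun h => by simp [h, zero_pow hn.ne'] at hξn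
  -- roots for σ and τ
  have aev : ∀ y : L, aeval y P = y ^ (2*n) - φ (2*Gg) * y ^ n + φ (F^n) := by
    intro y
    have : aeval y (X ^ (2 * n) - C (2 * Gg) * X ^ n + C (F ^ n))
        = y ^ (2*n) - φ (2*Gg) * y ^ n + φ (F^n) := by simp [hφ]
    rw [← hP] at this; exact this
  have hσroot : aeval (φ ξ * θ) P = 0 := by
    rw [aev]
    have h2n : (φ ξ) ^ (2*n) = 1 := by rw [two_mul, pow_add, hξn, one_mul]
    rw [mul_pow, mul_pow, h2n, hξn, one_mul, one_mul]
    exact hroot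
  have hroot' : θ ^ (2*n) - 2 * φ Gg * θ ^ n + (φ F)^n = 0 := by
    have := hroot
    rw [map_pow, map_mul φ 2 Gg, map_ofNat] at this; exact this
  have hτroot : aeval (φ F / θ) P = 0 := by
    rw [aev]
    simp only [map_pow, map_mul, map_ofNat]
    dsimp only [L] at *; rw [div_pow, div_pow]; field_simp
    linear_combination (φ F)^n * θ^n * hroot'
  -- automorphisms
  haveI : Algebra.IsAlgebraic K L := Algebra.IsAlgebraic.of_finite K L
  let σh : L →ₐ[K] L := AdjoinRoot.liftAlgHom P (Algebra.ofId K L) (φ ξ * θ) hσroot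
  let τh : L →ₐ[K] L := AdjoinRoot.liftAlgHom P (Algebra.ofId K L) (φ F / θ) hτroot
  let σ : L ≃ₐ[K] L := AlgEquiv.ofBijective σh (Algebra.IsAlgebraic.algHom_bijective σh)
  let τ : L ≃ₐ[K] L := AlgEquiv.ofBijective τh (Algebra.IsAlgebraic.algHom_bijective τh)
  have hσθ0 : AdjoinRoot.liftAlgHom P (Algebra.ofId K L) (φ ξ * θ) hσroot (AdjoinRoot.root P) = φ ξ * θ :=
    AdjoinRoot.liftAlgHom_root (p := P) (i := Algebra.ofId K L) (x := φ ξ * θ) (h := hσroot)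
  have hτθ0 : AdjoinRoot.liftAlgHom P (Algebra.ofId K L) (φ F / θ) hτroot (AdjoinRoot.root P) = φ F / θ :=
    AdjoinRoot.liftAlgHom_root (p := P) (i := Algebra.ofId K L) (x := φ F / θ) (h := hτroot)
  have hσθ : σ θ = φ ξ * θ := hσθ0
  have hτθ : τ θ = φ F / θ := hτθ0
  have ext2 : ∀ (e₁ e₂ : L ≃ₐ[K] L), e₁ θ = e₂ θ → e₁ = e₂ := by
    intro e₁ e₂ h
    have h2 : (e₁ : L →ₐ[K] L) = (e₂ : L →ₐ[K] L) := AdjoinRoot.algHom_ext h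
    exact AlgEquiv.ext fun x => DFunLike.congr_fun h2 x
  have hmulapp : ∀ (e₁ e₂ : L ≃ₐ[K] L) (x : L), (e₁ * e₂) x = e₁ (e₂ x) := fun _ _ _ => rfl
  have hfix : ∀ (e : L ≃ₐ[K] L) (a : K), e (φ a) = φ a := fun e a => by
    rw [hφ]; exact e.commutes a
  have hσpow : ∀ k : ℕ, (σ ^ k) θ = φ ξ ^ k * θ := by
    intro k; induction k with
    | zero => simp
    | succ k ih =>
      rw [pow_succ, hmulapp, hσθ, map_mul, hfix, ih, pow_succ]; ring
  have hσn : σ ^ n = 1 := by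
    apply ext2
    rw [hσpow, hξn]; simp
  have hτ2 : τ * τ = 1 := by
    apply ext2
    rw [hmulapp, hτθ, map_div₀, hfix, hτθ]
    show φ F / (φ F / θ) = θ
    dsimp only [L] at *; field_simp
  have hσinvθ : σ⁻¹ θ = (φ ξ)⁻¹ * θ := by
    have : σ ((φ ξ)⁻¹ * θ) = θ := by
      rw [map_mul, hσθ]
      have : σ ((φ ξ)⁻¹) = (φ ξ)⁻¹ := by rw [← map_inv₀ φ, hfix]
      rw [this]; dsimp only [L] at *; field_simp
    calc σ⁻¹ θ = σ⁻¹ (σ ((φ ξ)⁻¹ * θ)) := by rw [this]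
    _ = (φ ξ)⁻¹ * θ := by rw [← hmulapp, inv_mul_cancel]; rfl
  have hτσ : τ * σ = σ⁻¹ * τ := by
    apply ext2
    rw [hmulapp, hmulapp, hσθ, hτθ, map_mul, hfix, hτθ]
    rw [show σ⁻¹ (φ F / θ) = φ F / σ⁻¹ θ by rw [map_div₀, hfix], hσinvθ]
    dsimp only [L] at *; field_simp
  have hcomm : ∀ k : ℕ, τ * σ ^ k = (σ ^ k)⁻¹ * τ := by
    intro k; induction k with
    | zero => simp
    | succ k ih =>
      have hx : (σ ^ (k+1) : L ≃ₐ[K] L)⁻¹ = (σ ^ k)⁻¹ * σ⁻¹ := by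
        rw [pow_succ, mul_inv_rev]
        exact ((Commute.refl σ).pow_right k).inv_inv.eq
      rw [pow_succ, ← mul_assoc, ih, mul_assoc, hτσ, ← mul_assoc, ← hx, pow_succ]
  have hmod : ∀ a : ℕ, σ ^ (a % n) = σ ^ a := by
    intro a
    conv_rhs => rw [← Nat.div_add_mod a n]
    rw [pow_add, pow_mul, hσn, one_pow, one_mul]
  let χ : ZMod n → (L ≃ₐ[K] L) := fun i => σ ^ i.val
  have hχadd : ∀ i j : ZMod n, χ (i + j) = χ i * χ j := by
    intro i j
    show σ ^ (i + j).val = σ ^ i.val * σ ^ j.val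
    rw [ZMod.val_add, hmod, pow_add]
  have hχzero : χ 0 = 1 := by show σ ^ (0 : ZMod n).val = 1; simp
  have hχneg : ∀ i : ZMod n, χ (-i) = (χ i)⁻¹ := by
    intro i
    refine eq_inv_of_mul_eq_one_left ?_
    rw [← hχadd, neg_add_cancel, hχzero]
  have hχτ : ∀ i : ZMod n, τ * χ i = (χ i)⁻¹ * τ := fun i => hcomm i.val
  have hswap : ∀ i : ZMod n, χ i * τ = τ * χ (-i) := by
    intro i
    rw [hχτ (-i), hχneg, inv_inv]
  have hχnat : ∀ i : ℕ, χ (i : ZMod n) = σ ^ i := by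
    intro i
    show σ ^ (ZMod.val _) = σ ^ i
    rw [ZMod.val_natCast, hmod]
  -- classification of automorphisms
  have key : ∀ g : L ≃ₐ[K] L, (∃ i : ZMod n, g = χ i) ∨ (∃ i : ZMod n, g = τ * χ i) := by
    intro g
    have hg : (g θ) ^ (2*n) - 2 * φ Gg * (g θ) ^ n + (φ F) ^ n = 0 := by
      have h' := congrArg g hroot'
      simpa [map_sub, map_add, map_mul, map_pow, map_ofNat, hfix, map_zero] using h'
    have hfact : ((g θ) ^ n - θ ^ n) * ((g θ) ^ n + θ ^ n - 2 * φ Gg) = 0 := by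
      linear_combination hg - hroot'
    rcases mul_eq_zero.mp hfact with hc | hc
    · left
      have h1 : (g θ / θ) ^ n = 1 := by
        rw [div_pow, sub_eq_zero.mp hc, div_self (pow_ne_zero _ hθ0)]
      obtain ⟨i, _, hi⟩ := hξL.eq_pow_of_pow_eq_one h1
      refine ⟨(i : ZMod n), ?_⟩
      apply ext2
      rw [hχnat, hσpow, hi]
      dsimp only [L] at *; field_simp
    · right
      have hy : (g θ) ^ n = 2 * φ Gg - θ ^ n := by linear_combination hc
      have h1 : (g θ * θ / φ F) ^ n = 1 := by
        rw [div_pow, mul_pow, hy]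
        rw [div_eq_one_iff_eq (pow_ne_zero _ hφF)]
        linear_combination -hroot'
      obtain ⟨i, _, hi⟩ := hξL.eq_pow_of_pow_eq_one h1
      refine ⟨(i : ZMod n), ?_⟩
      apply ext2
      rw [hmulapp, hχnat, hσpow, map_mul, hτθ]
      have : τ (φ ξ ^ i) = φ ξ ^ i := by rw [← map_pow, hfix]
      rw [this, hi]
      dsimp only [L] at *; field_simp
  -- splitting field and Galois
  have hv : (φ F / θ) ^ n = 2 * φ Gg - θ ^ n := by
    rw [div_pow, div_eq_iff (pow_ne_zero _ hθ0)]
    linear_combination hroot'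
  have hfac : P.map φ = (X ^ n - C (θ ^ n)) * (X ^ n - C ((φ F / θ) ^ n)) := by
    have hfac' : (X ^ (2 * n) - C (2 * Gg) * X ^ n + C (F ^ n)).map φ
        = (X ^ n - C (θ ^ n)) * (X ^ n - C ((φ F / θ) ^ n)) := by
      simp only [Polynomial.map_add, Polynomial.map_sub, Polynomial.map_mul,
        Polynomial.map_pow, Polynomial.map_X, Polynomial.map_C]
      rw [map_mul φ 2 Gg, map_ofNat, map_pow]
      have huv : (φ F) ^ n = θ ^ n * (φ F / θ) ^ n := by
        rw [div_pow, mul_div_cancel₀ _ (pow_ne_zero _ hθ0)]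
      rw [huv, hv]
      simp only [map_sub, map_mul, map_ofNat]
      ring
    rw [← hP] at hfac'; exact hfac'
  have hsplit : (P.map φ).Splits := by
    rw [hfac]
    exact (X_pow_sub_C_splits_of_isPrimitiveRoot hξL rfl).mul
      (X_pow_sub_C_splits_of_isPrimitiveRoot hξL rfl)
  haveI hsf : P.IsSplittingField K L := by
    constructor
    · exact hsplit
    · rw [eq_top_iff, ← AdjoinRoot.adjoinRoot_eq_top (f := P)]
      apply Algebra.adjoin_mono
      intro x hx
      simp only [Set.mem_singleton_iff] at hx
      subst hx
      rw [Polynomial.mem_rootSet]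
      exact ⟨hPne, h0⟩
  haveI hGal : IsGalois K L := IsGalois.of_separable_splitting_field hirr.out.separable
  -- cardinalities and the dihedral isomorphism
  let D : DihedralGroup n → (L ≃ₐ[K] L) := fun g =>
    match g with
    | .r i => χ i
    | .sr i => τ * χ i
  have hDmul : ∀ a b, D (a * b) = D a * D b := by
    rintro (i | i) (j | j)
    · show χ (i + j) = χ i * χ j
      exact hχadd i j
    · show τ * χ (j - i) = χ i * (τ * χ j)
      rw [← mul_assoc, hswap, mul_assoc, ← hχadd, neg_add_eq_sub]
    · show τ * χ (i + j) = τ * χ i * χ j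
      rw [mul_assoc, ← hχadd]
    · show χ (j - i) = τ * χ i * (τ * χ j)
      rw [mul_assoc, ← mul_assoc (χ i), hswap, ← mul_assoc, ← mul_assoc, hτ2,
        one_mul, ← hχadd, neg_add_eq_sub]
  let Dh : DihedralGroup n →* (L ≃ₐ[K] L) :=
    { toFun := D
      map_one' := by show χ 0 = 1; exact hχzero
      map_mul' := hDmul }
  have hDsurj : Function.Surjective Dh := by
    intro g
    rcases key g with ⟨i, rfl⟩ | ⟨i, rfl⟩
    · exact ⟨DihedralGroup.r i, rfl⟩
    · exact ⟨DihedralGroup.sr i, rfl⟩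
  have hcard : Fintype.card (L ≃ₐ[K] L) = 2 * n := by
    rw [← Nat.card_eq_fintype_card, IsGalois.card_aut_eq_finrank, hfr]
  have hcardD : Fintype.card (DihedralGroup n) = 2 * n := DihedralGroup.card
  have hDbij : Function.Bijective Dh :=
    (Fintype.bijective_iff_surjective_and_card Dh).mpr ⟨hDsurj, by rw [hcardD, hcard]⟩
  -- closure
  have hclos : Subgroup.closure {σ, τ} = ⊤ := by
    rw [eq_top_iff]
    intro g _
    have hσmem : σ ∈ Subgroup.closure ({σ, τ} : Set (L ≃ₐ[K] L)) :=
      Subgroup.subset_closure (by simp)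
    have hτmem : τ ∈ Subgroup.closure ({σ, τ} : Set (L ≃ₐ[K] L)) :=
      Subgroup.subset_closure (by simp)
    rcases key g with ⟨i, rfl⟩ | ⟨i, rfl⟩
    · exact pow_mem hσmem _
    · exact mul_mem hτmem (pow_mem hσmem _)
  refine ⟨hGal, ⟨(MulEquiv.ofBijective Dh hDbij).symm⟩, σ, τ, ?_, ?_, hclos⟩
  · exact hσθ
  · exact hτθ
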